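/- For all positive integers n and x, the following identity holds: (xn + n − 1) · #{ (r_1,…,r_n) ∈ ℕ^n : r_1 + ⋯ + r_k ≤ kx − 1 for every 1 ≤ k ≤ n−1, and r_1 + ⋯ + r_n = nx − 1 } = binom(xn + n − 1, n). -/

import Mathlib

namespace Stmt19

variable {n : ℕ}

/-- periodic extension of a tuple -/
def rext (hn : 0 < n) (r : Fin n → ℕ) (i : ℕ) : ℕ := r ⟨i % n, Nat.mod_lt _ hn⟩

/-- rotation of a tuple by `d` -/
def rot (hn : 0 < n) (d : ℕ) (r : Fin n → ℕ) : Fin n → ℕ := fun i => rext hn r (i + d)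

/-- partial sums of the periodic extension -/
def S (hn : 0 < n) (r : Fin n → ℕ) (k : ℕ) : ℕ := ∑ i ∈ Finset.range k, rext hn r i

/-- the height function -/
def G (hn : 0 < n) (x : ℕ) (r : Fin n → ℕ) (k : ℕ) : ℤ := (S hn r k : ℤ) - k * x

lemma rext_coe (hn : 0 < n) (r : Fin n → ℕ) (i : Fin n) : rext hn r i = r i := by
  unfold rext; congr 1; exact Fin.ext (Nat.mod_eq_of_lt i.isLt)

lemma rext_add_n (hn : 0 < n) (r : Fin n → ℕ) (i : ℕ) :
    rext hn r (i + n) = rext hn r i := by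
  unfold rext; congr 1; exact Fin.ext (Nat.add_mod_right i n)

lemma rext_mod (hn : 0 < n) (r : Fin n → ℕ) (i : ℕ) :
    rext hn r (i % n) = rext hn r i := by
  unfold rext; congr 1; exact Fin.ext (Nat.mod_mod_of_dvd i dvd_rfl)

lemma rext_rot (hn : 0 < n) (d : ℕ) (r : Fin n → ℕ) (i : ℕ) :
    rext hn (rot hn d r) i = rext hn r (i + d) := by
  show r ⟨(i % n + d) % n, _⟩ = r ⟨(i + d) % n, _⟩
  congr 1
  exact Fin.ext (Nat.mod_add_mod i n d)

lemma rot_rot (hn : 0 < n) (a b : ℕ) (r : Fin n → ℕ) :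
    rot hn a (rot hn b r) = rot hn (a + b) r := by
  funext i
  show rext hn (rot hn b r) (↑i + a) = rext hn r (↑i + (a + b))
  rw [rext_rot, add_assoc]

lemma rot_zero (hn : 0 < n) (r : Fin n → ℕ) : rot hn 0 r = r := by
  funext i
  show rext hn r (↑i + 0) = r i
  rw [Nat.add_zero, rext_coe]

lemma rot_add_n (hn : 0 < n) (a : ℕ) (r : Fin n → ℕ) :
    rot hn (a + n) r = rot hn a r := by
  funext i
  show rext hn r (↑i + (a + n)) = rext hn r (↑i + a)
  rw [← add_assoc, rext_add_n]

lemma rot_mod (hn : 0 < n) (a : ℕ) (r : Fin n → ℕ) :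
    rot hn (a % n) r = rot hn a r := by
  funext i
  show rext hn r (↑i + a % n) = rext hn r (↑i + a)
  rw [← rext_mod hn r (↑i + a % n), ← rext_mod hn r (↑i + a)]
  congr 1
  exact Nat.add_mod_mod _ _ _

lemma sum_range_n_rext (hn : 0 < n) (r : Fin n → ℕ) :
    ∑ i ∈ Finset.range n, rext hn r i = ∑ j, r j := by
  rw [Finset.sum_range fun i => rext hn r i]
  exact Finset.sum_congr rfl fun i _ => rext_coe hn r i

lemma window (hn : 0 < n) (r : Fin n → ℕ) (k : ℕ) :
    ∑ i ∈ Finset.range n, rext hn r (k + i) = ∑ j, r j := by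
  induction k with
  | zero => simpa using sum_range_n_rext hn r
  | succ k ih =>
    have h1 : ∑ i ∈ Finset.range (n + 1), rext hn r (k + i)
        = (∑ i ∈ Finset.range n, rext hn r (k + (i + 1))) + rext hn r (k + 0) :=
      Finset.sum_range_succ' _ n
    have h2 : ∑ i ∈ Finset.range (n + 1), rext hn r (k + i)
        = (∑ i ∈ Finset.range n, rext hn r (k + i)) + rext hn r (k + n) :=
      Finset.sum_range_succ _ n
    have h3 : rext hn r (k + n) = rext hn r (k + 0) := by
      rw [Nat.add_zero, rext_add_n]
    have h4 : ∀ i, rext hn r (k + (i + 1)) = rext hn r ((k + 1) + i) := by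
      intro i; congr 1; omega
    calc ∑ i ∈ Finset.range n, rext hn r ((k + 1) + i)
        = ∑ i ∈ Finset.range n, rext hn r (k + (i + 1)) :=
          Finset.sum_congr rfl fun i _ => (h4 i).symm
      _ = ∑ i ∈ Finset.range n, rext hn r (k + i) := by omega
      _ = ∑ j, r j := ih

lemma S_add (hn : 0 < n) (r : Fin n → ℕ) (a b : ℕ) :
    S hn r (a + b) = S hn r a + ∑ i ∈ Finset.range b, rext hn r (a + i) := by
  induction b with
  | zero => simp [S]
  | succ b ih =>
    rw [← Nat.add_assoc, S, Finset.sum_range_succ, ← S, ih, Finset.sum_range_succ]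
    omega

lemma S_add_n (hn : 0 < n) (r : Fin n → ℕ) (k : ℕ) :
    S hn r (k + n) = S hn r k + ∑ j, r j := by
  rw [S_add, window]

lemma rot_sum (hn : 0 < n) (d : ℕ) (r : Fin n → ℕ) :
    ∑ j, rot hn d r j = ∑ j, r j := by
  rw [← sum_range_n_rext hn (rot hn d r)]
  calc ∑ i ∈ Finset.range n, rext hn (rot hn d r) i
      = ∑ i ∈ Finset.range n, rext hn r (d + i) := by
        refine Finset.sum_congr rfl fun i _ => ?_
        rw [rext_rot, Nat.add_comm]
    _ = ∑ j, r j := window hn r d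

lemma S_rot (hn : 0 < n) (d : ℕ) (r : Fin n → ℕ) (k : ℕ) :
    S hn r d + S hn (rot hn d r) k = S hn r (d + k) := by
  rw [S_add]
  congr 1
  refine Finset.sum_congr rfl fun i _ => ?_
  show rext hn (rot hn d r) i = rext hn r (d + i)
  rw [rext_rot, Nat.add_comm]

lemma filter_sum (hn : 0 < n) (r : Fin n → ℕ) (k : ℕ) (hk : k ≤ n) :
    ∑ j ∈ Finset.univ.filter (fun j : Fin n => (j : ℕ) < k), r j = S hn r k := by
  rw [Finset.sum_filter]
  have h1 : (∑ a : Fin n, if (a : ℕ) < k then r a else 0)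
      = ∑ a : Fin n, (fun i : ℕ => if i < k then rext hn r i else 0) ↑a := by
    refine Finset.sum_congr rfl fun a _ => ?_
    simp only [rext_coe]
  rw [h1, ← Finset.sum_range (fun i => if i < k then rext hn r i else 0)]
  rw [← Finset.sum_subset (Finset.range_subset_range.2 hk)
    (fun i _ hi => by simp only [Finset.mem_range, not_lt] at hi; simp [Nat.not_lt.2 hi])]
  exact Finset.sum_congr rfl fun i hi => if_pos (Finset.mem_range.1 hi)

lemma rot_n (hn : 0 < n) (r : Fin n → ℕ) : rot hn n r = r := by
  have h := rot_add_n hn 0 r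
  rw [Nat.zero_add, rot_zero] at h
  exact h

lemma rot_cancel (hn : 0 < n) (d : ℕ) (hd : d ≤ n) (r : Fin n → ℕ) :
    rot hn (n - d) (rot hn d r) = r := by
  rw [rot_rot, Nat.sub_add_cancel hd, rot_n]

lemma G_per (hn : 0 < n) (x : ℕ) (hx : 0 < x) (r : Fin n → ℕ)
    (hsum : ∑ j, r j = n * x - 1) (k : ℕ) :
    G hn x r (k + n) = G hn x r k - 1 := by
  unfold G
  rw [S_add_n hn r k, hsum]
  have h1 : 1 ≤ n * x := Nat.one_le_iff_ne_zero.2 (Nat.mul_ne_zero (by omega) (by omega))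
  push_cast [h1]
  ring

/-- the rotated validity predicate -/
def Q (hn : 0 < n) (x : ℕ) (r : Fin n → ℕ) (d : ℕ) : Prop :=
  ∀ k : ℕ, 1 ≤ k → k ≤ n - 1 → G hn x r (d + k) + 1 ≤ G hn x r d

lemma P_rot_iff (hn : 0 < n) (x : ℕ) (hx : 0 < x) (r : Fin n → ℕ) (d : ℕ) :
    (∀ k : ℕ, 1 ≤ k → k ≤ n - 1 →
        ∑ j ∈ Finset.univ.filter (fun j : Fin n => (j : ℕ) < k), rot hn d r j ≤ k * x - 1)
      ↔ Q hn x r d := by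
  unfold Q
  have key : ∀ k : ℕ, 1 ≤ k → k ≤ n - 1 →
      ((∑ j ∈ Finset.univ.filter (fun j : Fin n => (j : ℕ) < k), rot hn d r j ≤ k * x - 1)
        ↔ (G hn x r (d + k) + 1 ≤ G hn x r d)) := by
    intro k hk1 hk2
    have hkn : k ≤ n := le_trans hk2 (Nat.sub_le n 1)
    rw [filter_sum hn _ k hkn]
    have h3 := S_rot hn d r k
    have hkx : 1 ≤ k * x := Nat.one_le_iff_ne_zero.2 (Nat.mul_ne_zero (by omega) (by omega))
    unfold G
    have h3' : (S hn r d : ℤ) + (S hn (rot hn d r) k : ℤ) = (S hn r (d + k) : ℤ) := by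
      exact_mod_cast congrArg (Nat.cast : ℕ → ℤ) h3
    have hc : ((d : ℤ) + (k : ℤ)) * (x : ℤ) = (d : ℤ) * x + (k : ℤ) * x := by ring
    constructor
    · intro h
      have h' : (S hn (rot hn d r) k : ℤ) ≤ (k : ℤ) * (x : ℤ) - 1 := by
        have := h
        zify [hkx] at this
        exact this
      push_cast
      rw [hc]
      linarith
    · intro h
      push_cast at h
      rw [hc] at h
      zify [hkx]
      linarith
  constructor
  · intro h k hk1 hk2; exact (key k hk1 hk2).1 (h k hk1 hk2)
  · intro h k hk1 hk2; exact (key k hk1 hk2).2 (h k hk1 hk2)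

lemma cycle (hn : 0 < n) (x : ℕ) (hx : 0 < x) (r : Fin n → ℕ)
    (hsum : ∑ j, r j = n * x - 1) :
    ∃! d : ℕ, d < n ∧ Q hn x r d := by
  classical
  have hexists : ∃ d : ℕ, d < n ∧ Q hn x r d := by
    obtain ⟨b, hb, hbmax⟩ := Finset.exists_max_image (Finset.range n) (G hn x r)
      ⟨0, Finset.mem_range.2 hn⟩
    set T : Finset ℕ := (Finset.range n).filter
      (fun j => ∀ j' ∈ Finset.range n, G hn x r j' ≤ G hn x r j) with hT
    have hTne : T.Nonempty := ⟨b, Finset.mem_filter.2 ⟨hb, hbmax⟩⟩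
    set d := T.max' hTne with hd
    have hdT : d ∈ T := T.max'_mem hTne
    obtain ⟨hdn, hdmax⟩ := Finset.mem_filter.1 hdT
    rw [Finset.mem_range] at hdn
    refine ⟨d, hdn, ?_⟩
    intro k hk1 hk2
    rcases lt_or_ge (d + k) n with hlt | hge
    · have h1 : G hn x r (d + k) ≤ G hn x r d := hdmax _ (Finset.mem_range.2 hlt)
      by_contra hcon
      have heq : G hn x r (d + k) = G hn x r d := by push_neg at hcon; linarith
      have hmem : d + k ∈ T := Finset.mem_filter.2 ⟨Finset.mem_range.2 hlt,
        fun j' hj' => heq ▸ hdmax j' hj'⟩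
      have hle := Finset.le_max' T _ hmem
      omega
    · have hjn : d + k - n < n := by omega
      have h1 : G hn x r (d + k - n) ≤ G hn x r d := hdmax _ (Finset.mem_range.2 hjn)
      rw [show d + k = (d + k - n) + n by omega, G_per hn x hx r hsum]
      linarith
  obtain ⟨d, hd⟩ := hexists
  refine ⟨d, hd, ?_⟩
  have huniq : ∀ d₁ d₂ : ℕ, d₁ < d₂ → d₂ < n → Q hn x r d₁ → Q hn x r d₂ → False := by
    intro d₁ d₂ h12 h2n hQ1 hQ2
    have hk1 : G hn x r (d₁ + (d₂ - d₁)) + 1 ≤ G hn x r d₁ := hQ1 _ (by omega) (by omega)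
    have hk2 : G hn x r (d₂ + (d₁ + n - d₂)) + 1 ≤ G hn x r d₂ := hQ2 _ (by omega) (by omega)
    rw [show d₁ + (d₂ - d₁) = d₂ by omega] at hk1
    rw [show d₂ + (d₁ + n - d₂) = d₁ + n by omega, G_per hn x hx r hsum] at hk2
    linarith
  rintro d' ⟨hd'n, hd'Q⟩
  rcases lt_trichotomy d' d with h | h | h
  · exact absurd (huniq d' d h hd.1 hd'Q hd.2) not_false
  · exact h
  · exact absurd (huniq d d' h hd'n hd.2 hd'Q) not_false

lemma arith (n y V : ℕ) (hn : 0 < n) (hy : 1 ≤ y)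
    (h1 : V * n = (n + (y - 1) - 1).choose (y - 1)) :
    (y + n - 1) * V = (y + n - 1).choose n := by
  have h2 : n + (y - 1) - 1 = y + n - 1 - 1 := by omega
  have h3 : y - 1 = (y + n - 1 - 1) - (n - 1) := by omega
  have h4 : n - 1 ≤ y + n - 1 - 1 := by omega
  have h5 : (y + n - 1 - 1).choose (y - 1) = (y + n - 1 - 1).choose (n - 1) := by
    rw [h3, Nat.choose_symm h4]
  have h6 : Nat.succ (y + n - 1 - 1) * (y + n - 1 - 1).choose (n - 1) =
      (Nat.succ (y + n - 1 - 1)).choose (Nat.succ (n - 1)) * Nat.succ (n - 1) :=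
    Nat.add_one_mul_choose_eq (y + n - 1 - 1) (n - 1)
  have h7 : Nat.succ (y + n - 1 - 1) = y + n - 1 := by omega
  have h8 : Nat.succ (n - 1) = n := by omega
  rw [h7, h8] at h6
  have h9 : ((y + n - 1) * V) * n = ((y + n - 1).choose n) * n := by
    calc ((y + n - 1) * V) * n = (y + n - 1) * (V * n) := by ring
      _ = (y + n - 1) * ((y + n - 1 - 1).choose (n - 1)) := by rw [h1, h2, h5]
      _ = (y + n - 1).choose n * n := h6
  exact Nat.eq_of_mul_eq_mul_right hn h9

end Stmt19

theorem stmt19 (n x : ℕ) (hn : 0 < n) (hx : 0 < x) :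
    (x * n + n - 1) * Nat.card {r : Fin n → ℕ //
      (∀ k : ℕ, 1 ≤ k → k ≤ n - 1 →
        ∑ j ∈ Finset.univ.filter (fun j : Fin n => (j : ℕ) < k), r j ≤ k * x - 1) ∧
      (∑ j, r j = n * x - 1)} =
    Nat.choose (x * n + n - 1) n := by
  classical
  set Valid := {r : Fin n → ℕ //
      (∀ k : ℕ, 1 ≤ k → k ≤ n - 1 →
        ∑ j ∈ Finset.univ.filter (fun j : Fin n => (j : ℕ) < k), r j ≤ k * x - 1) ∧
      (∑ j, r j = n * x - 1)} with hValid
  let A := {r : Fin n → ℕ // ∑ j, r j = n * x - 1}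
  let F : Valid × Fin n → A := fun p => ⟨Stmt19.rot hn p.2 p.1.val, by
    rw [Stmt19.rot_sum]; exact p.1.2.2⟩
  have hFinj : Function.Injective F := by
    rintro ⟨⟨r, hrP, hrs⟩, d⟩ ⟨⟨r', hrP', hrs'⟩, d'⟩ hF
    have hF' : Stmt19.rot hn ↑d r = Stmt19.rot hn ↑d' r' := congrArg Subtype.val hF
    have hdn : (d : ℕ) < n := d.isLt
    have hd'n : (d' : ℕ) < n := d'.isLt
    have hr' : r' = Stmt19.rot hn ((n - ↑d') + ↑d) r := by
      calc r' = Stmt19.rot hn (n - ↑d') (Stmt19.rot hn ↑d' r') :=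
            (Stmt19.rot_cancel hn ↑d' (le_of_lt hd'n) r').symm
        _ = Stmt19.rot hn (n - ↑d') (Stmt19.rot hn ↑d r) := by rw [hF']
        _ = Stmt19.rot hn ((n - ↑d') + ↑d) r := Stmt19.rot_rot hn _ _ r
    set e : ℕ := (n - ↑d') + ↑d with he
    have hQ0 : Stmt19.Q hn x r 0 := by
      refine (Stmt19.P_rot_iff hn x hx r 0).1 ?_
      rw [Stmt19.rot_zero]
      exact hrP
    have hQe : Stmt19.Q hn x r (e % n) := by
      refine (Stmt19.P_rot_iff hn x hx r (e % n)).1 ?_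
      rw [Stmt19.rot_mod]
      rw [← hr']
      exact hrP'
    obtain ⟨d₀, hd₀, huniq⟩ := Stmt19.cycle hn x hx r hrs
    have h0 : (0 : ℕ) = d₀ := huniq 0 ⟨hn, hQ0⟩
    have hemod : e % n = d₀ := huniq (e % n) ⟨Nat.mod_lt _ hn, hQe⟩
    have hen : e % n = 0 := by omega
    have hdvd : n ∣ e := Nat.dvd_of_mod_eq_zero hen
    have he1 : 1 ≤ e := by omega
    have he2 : e < 2 * n := by omega
    obtain ⟨c, hc⟩ := hdvd
    have hceq : e = n := by
      match c, hc with
      | 0, hc => omega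
      | 1, hc => omega
      | (c + 2), hc =>
        have : n * 2 ≤ n * (c + 2) := Nat.mul_le_mul_left n (by omega)
        omega
    have hdd' : (d : ℕ) = (d' : ℕ) := by omega
    have hrr' : r = r' := by
      rw [hr', hceq, Stmt19.rot_n]
    subst hrr'
    have : d = d' := Fin.ext hdd'
    subst this
    rfl
  have hFsurj : Function.Surjective F := by
    rintro ⟨s, hs⟩
    obtain ⟨d, ⟨hdn, hdQ⟩, _⟩ := Stmt19.cycle hn x hx s hs
    have hP : ∀ k : ℕ, 1 ≤ k → k ≤ n - 1 →
        ∑ j ∈ Finset.univ.filter (fun j : Fin n => (j : ℕ) < k),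
          Stmt19.rot hn d s j ≤ k * x - 1 :=
      (Stmt19.P_rot_iff hn x hx s d).2 hdQ
    have hsum' : ∑ j, Stmt19.rot hn d s j = n * x - 1 := by
      rw [Stmt19.rot_sum]; exact hs
    refine ⟨⟨⟨Stmt19.rot hn d s, hP, hsum'⟩, ⟨(n - d) % n, Nat.mod_lt _ hn⟩⟩, ?_⟩
    apply Subtype.ext
    show Stmt19.rot hn ((n - d) % n) (Stmt19.rot hn d s) = s
    rw [Stmt19.rot_mod, Stmt19.rot_cancel hn d (le_of_lt hdn)]
  have hcard : Nat.card Valid * n = Nat.card A := by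
    rw [← Nat.card_eq_of_bijective F ⟨hFinj, hFsurj⟩, Nat.card_prod,
      Nat.card_eq_fintype_card (α := Fin n), Fintype.card_fin]
  have hA : Nat.card A = (n + (n * x - 1) - 1).choose (n * x - 1) := by
    have e1 : Nat.card A = Nat.card (Sym (Fin n) (n * x - 1)) :=
      Nat.card_congr (Sym.equivNatSumOfFintype (Fin n) (n * x - 1)).symm
    rw [e1, Nat.card_eq_fintype_card, Sym.card_sym_eq_choose, Fintype.card_fin]
  rw [show x * n = n * x from mul_comm x n]
  exact Stmt19.arith n (n * x) (Nat.card Valid) hn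
    (Nat.one_le_iff_ne_zero.2 (Nat.mul_ne_zero (by omega) (by omega)))
    (by rw [hcard, hA])
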